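/- For any two integrable random variables X and S on a common probability space with X having continuous distribution function, and any p in (0,1), the conditional expectation E[X | S > VaR_p(S)] is at least LES_{1-p}(X) = E[X | X ≤ VaR_{1-p}(X)]. -/

import Mathlib

open MeasureTheory

/-- Value-at-Risk: the `p`-quantile of `X` under `μ`. -/
noncomputable def VaR {Ω : Type*} [MeasurableSpace Ω] (μ : Measure Ω) (X : Ω → ℝ) (p : ℝ) : ℝ :=
  sInf {x : ℝ | p ≤ (μ {ω | X ω ≤ x}).toReal}

/-- Conditional expectation of `X` given an event `A`. -/
noncomputable def condExpEvent {Ω : Type*} [MeasurableSpace Ω] (μ : Measure Ω) (X : Ω → ℝ)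
    (A : Set Ω) : ℝ :=
  (∫ ω in A, X ω ∂μ) / (μ A).toReal

/-- LES_{1-p}(X) = E[X | X ≤ VaR_{1-p}(X)] ≤ E[X | S > VaR_p(S)] when the CDF
of X is continuous and P(S > VaR_p(S)) = 1 - p > 0. -/
theorem les_le_mes {Ω : Type*} [MeasurableSpace Ω] (μ : Measure Ω) [IsProbabilityMeasure μ]
    (X S : Ω → ℝ) (hX : Measurable X) (hS : Measurable S)
    (hXint : Integrable X μ) (hSint : Integrable S μ)
    (hcont : Continuous fun x : ℝ => (μ {ω | X ω ≤ x}).toReal)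
    (p : ℝ) (hp : p ∈ Set.Ioo (0 : ℝ) 1)
    (htail : (μ {ω | S ω > VaR μ S p}).toReal = 1 - p) :
    condExpEvent μ X {ω | X ω ≤ VaR μ X (1 - p)} ≤ condExpEvent μ X {ω | S ω > VaR μ S p} := by
  obtain ⟨hp0, hp1⟩ := hp
  set F : ℝ → ℝ := fun x => (μ {ω | X ω ≤ x}).toReal with hFdef
  have hFmono : Monotone F := fun a b hab =>
    ENNReal.toReal_mono (measure_ne_top _ _) (measure_mono fun ω h => le_trans h hab)
  haveI : IsProbabilityMeasure (μ.map X) := Measure.isProbabilityMeasure_map hX.aemeasurable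
  have hmap : ∀ x, F x = ProbabilityTheory.cdf (μ.map X) x := by
    intro x
    rw [ProbabilityTheory.cdf_eq_real, measureReal_def, Measure.map_apply hX measurableSet_Iic]
    rfl
  have hFtop : Filter.Tendsto F Filter.atTop (nhds 1) :=
    (ProbabilityTheory.tendsto_cdf_atTop (μ.map X)).congr fun x => (hmap x).symm
  have hFbot : Filter.Tendsto F Filter.atBot (nhds 0) :=
    (ProbabilityTheory.tendsto_cdf_atBot (μ.map X)).congr fun x => (hmap x).symm
  -- the set defining VaR for X
  set T : Set ℝ := {x : ℝ | 1 - p ≤ F x} with hTdef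
  obtain ⟨b, hb⟩ : ∃ b, 1 - p ≤ F b := by
    have : ∀ᶠ x in Filter.atTop, 1 - p < F x :=
      hFtop.eventually_const_lt (by linarith)
    obtain ⟨b, hb⟩ := this.exists
    exact ⟨b, hb.le⟩
  obtain ⟨b0, hb0⟩ : ∃ b0, F b0 < 1 - p := by
    have : ∀ᶠ x in Filter.atBot, F x < 1 - p :=
      hFbot.eventually_lt_const (by linarith)
    exact this.exists
  have hTne : T.Nonempty := ⟨b, hb⟩
  have hb0lb : b0 ∈ lowerBounds T := by
    intro x hx
    by_contra h
    push_neg at h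
    exact absurd (le_trans hx (hFmono h.le)) (not_le.2 hb0)
  have hTbdd : BddBelow T := ⟨b0, hb0lb⟩
  have hTclosed : IsClosed T := isClosed_Ici.preimage hcont
  set v1 : ℝ := VaR μ X (1 - p) with hv1def
  have hv1T : v1 ∈ T := hTclosed.csInf_mem hTne hTbdd
  have hb0v1 : b0 ≤ v1 := le_csInf hTne hb0lb
  have hFv1 : F v1 = 1 - p := by
    obtain ⟨c, hcmem, hcF⟩ :=
      intermediate_value_Icc hb0v1 hcont.continuousOn ⟨hb0.le, hv1T⟩
    have hv1c : v1 ≤ c := csInf_le hTbdd (by simpa [hTdef] using hcF.ge)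
    have : c = v1 := le_antisymm hcmem.2 hv1c
    rw [← this]; exact hcF
  -- the sets
  set A : Set Ω := {ω | X ω ≤ v1} with hAdef
  set B : Set Ω := {ω | S ω > VaR μ S p} with hBdef
  have mA : MeasurableSet A := measurableSet_le hX measurable_const
  have mB : MeasurableSet B := measurableSet_lt measurable_const hS
  have hA : (μ A).toReal = 1 - p := hFv1
  have hB : (μ B).toReal = 1 - p := htail
  have hABeq : μ A = μ B :=
    (ENNReal.toReal_eq_toReal_iff' (measure_ne_top μ A) (measure_ne_top μ B)).mp
      (hA.trans hB.symm)
  have hdiff : μ (A \ B) = μ (B \ A) := by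
    have h1 : μ (A ∩ B) + μ (A \ B) = μ A := measure_inter_add_diff A mB
    have h2 : μ (A ∩ B) + μ (B \ A) = μ B := by
      rw [Set.inter_comm]; exact measure_inter_add_diff B mA
    rw [hABeq, ← h2] at h1
    exact (ENNReal.add_right_inj (measure_ne_top μ (A ∩ B))).mp h1
  have hdiffr : (μ (A \ B)).toReal = (μ (B \ A)).toReal := by rw [hdiff]
  -- split the integrals
  have splitA : ∫ ω in A ∩ B, X ω ∂μ + ∫ ω in A \ B, X ω ∂μ = ∫ ω in A, X ω ∂μ :=
    integral_inter_add_diff mB hXint.integrableOn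
  have splitB : ∫ ω in A ∩ B, X ω ∂μ + ∫ ω in B \ A, X ω ∂μ = ∫ ω in B, X ω ∂μ := by
    rw [Set.inter_comm]; exact integral_inter_add_diff mA hXint.integrableOn
  -- bounds on the pieces
  have bound1 : ∫ ω in A \ B, X ω ∂μ ≤ v1 * (μ (A \ B)).toReal := by
    have : ∫ ω in A \ B, X ω ∂μ ≤ ∫ _ in A \ B, v1 ∂μ := by
      refine setIntegral_mono_on hXint.integrableOn
        (integrableOn_const (measure_lt_top μ _).ne) (mA.diff mB) ?_
      intro x hx
      exact hx.1
    simpa [setIntegral_const, smul_eq_mul, mul_comm, measureReal_def] using this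
  have bound2 : v1 * (μ (B \ A)).toReal ≤ ∫ ω in B \ A, X ω ∂μ := by
    have : ∫ _ in B \ A, v1 ∂μ ≤ ∫ ω in B \ A, X ω ∂μ := by
      refine setIntegral_mono_on
        (integrableOn_const (measure_lt_top μ _).ne) hXint.integrableOn
        (mB.diff mA) ?_
      intro x hx
      exact le_of_lt (lt_of_not_ge hx.2)
    simpa [setIntegral_const, smul_eq_mul, mul_comm, measureReal_def] using this
  have hint : ∫ ω in A, X ω ∂μ ≤ ∫ ω in B, X ω ∂μ := by
    rw [← splitA, ← splitB]
    have := hdiffr ▸ bound1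
    linarith
  -- conclude
  unfold condExpEvent
  rw [show μ {ω | X ω ≤ VaR μ X (1 - p)} = μ A from rfl,
    show μ {ω | S ω > VaR μ S p} = μ B from rfl, hA, hB]
  gcongr
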